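/- Let ρ ≥ 1. Then H_N/N → 1 in probability as N → ∞; that is, for every ε > 0, ∑_{k ∈ {1,…,N}, |k/N − 1| ≥ ε} P(H_N = k) → 0 as N → ∞. -/
import Mathlib


open Finset Filter Real Topology

/-- `r_{ρ,n}(i) = ρ^{-i} * C(n-1, i)^{-1}`. -/
noncomputable def rfun (ρ : ℝ) (n i : ℕ) : ℝ := (ρ ^ i * (Nat.choose (n - 1) i : ℝ))⁻¹

/-- `P(H_N ≥ k)` for `k = 1,…,N`, and `0` for `k > N`. -/
noncomputable def tailP (ρ : ℝ) (N k : ℕ) : ℝ :=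
  if k ≤ N then (∑ i ∈ Finset.range k, rfun ρ N i)⁻¹ else 0

/-- `P(H_N = k) = P(H_N ≥ k) − P(H_N ≥ k+1)`. -/
noncomputable def pmfP (ρ : ℝ) (N k : ℕ) : ℝ := tailP ρ N k - tailP ρ N (k + 1)

/-- `E(H_N) = ∑_{k=1}^N P(H_N ≥ k)`. -/
noncomputable def EH (ρ : ℝ) (N : ℕ) : ℝ := ∑ k ∈ Finset.Icc 1 N, tailP ρ N k

/-- `Var(H_N) = ∑_{k=1}^N (k − E(H_N))² P(H_N = k)`. -/
noncomputable def VarH (ρ : ℝ) (N : ℕ) : ℝ :=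
  ∑ k ∈ Finset.Icc 1 N, ((k : ℝ) - EH ρ N) ^ 2 * pmfP ρ N k

/-- `P(H_N ≤ t)` for a real threshold `t`. -/
noncomputable def cdfP (ρ : ℝ) (N : ℕ) (t : ℝ) : ℝ :=
  ∑ k ∈ (Finset.Icc 1 N).filter (fun k : ℕ => (k : ℝ) ≤ t), pmfP ρ N k

/-! ### Auxiliary lemmas -/

lemma rfun_nonneg {ρ : ℝ} (hρ : 0 ≤ ρ) (n i : ℕ) : 0 ≤ rfun ρ n i := by
  unfold rfun; positivity

lemma rfun_zero (ρ : ℝ) (n : ℕ) : rfun ρ n 0 = 1 := by simp [rfun]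

lemma one_le_sum_rfun {ρ : ℝ} (hρ : 0 ≤ ρ) (N k : ℕ) (hk : 1 ≤ k) :
    1 ≤ ∑ i ∈ Finset.range k, rfun ρ N i := by
  calc (1 : ℝ) = rfun ρ N 0 := (rfun_zero ρ N).symm
    _ ≤ ∑ i ∈ Finset.range k, rfun ρ N i :=
      Finset.single_le_sum (fun i _ => rfun_nonneg hρ N i) (Finset.mem_range.mpr hk)

lemma pmfP_nonneg {ρ : ℝ} (hρ : 0 ≤ ρ) (N k : ℕ) (hk : 1 ≤ k) : 0 ≤ pmfP ρ N k := by
  unfold pmfP tailP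
  by_cases h1 : k + 1 ≤ N
  · rw [if_pos (by omega), if_pos h1]
    have hpos : (0 : ℝ) < ∑ i ∈ Finset.range k, rfun ρ N i :=
      lt_of_lt_of_le one_pos (one_le_sum_rfun hρ N k hk)
    have hle : ∑ i ∈ Finset.range k, rfun ρ N i ≤ ∑ i ∈ Finset.range (k + 1), rfun ρ N i :=
      Finset.sum_le_sum_of_subset_of_nonneg (Finset.range_subset_range.mpr (Nat.le_succ k))
        (fun i _ _ => rfun_nonneg hρ N i)
    have := inv_anti₀ hpos hle
    linarith
  · by_cases h2 : k ≤ N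
    · rw [if_pos h2, if_neg h1]
      have : (0 : ℝ) ≤ (∑ i ∈ Finset.range k, rfun ρ N i)⁻¹ :=
        inv_nonneg.mpr (Finset.sum_nonneg fun i _ => rfun_nonneg hρ N i)
      linarith
    · rw [if_neg h2, if_neg (by omega)]; simp

lemma tailP_one {ρ : ℝ} (N : ℕ) (hN : 1 ≤ N) : tailP ρ N 1 = 1 := by
  rw [tailP, if_pos hN]
  simp [rfun]

lemma sum_pmfP_Icc (ρ : ℝ) (N m : ℕ) :
    ∑ k ∈ Finset.Icc 1 m, pmfP ρ N k = tailP ρ N 1 - tailP ρ N (m + 1) := by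
  induction m with
  | zero => simp
  | succ n ih =>
      rw [Finset.sum_Icc_succ_top (by omega : 1 ≤ n + 1), ih]
      unfold pmfP; ring

/-- monotonicity of `choose` up to the middle -/
lemma choose_mono_half {n r : ℕ} : ∀ s, r ≤ s → s ≤ n / 2 → n.choose r ≤ n.choose s := by
  intro s
  induction s with
  | zero => intro h _; simp [Nat.le_zero.mp h]
  | succ s ih =>
      intro hrs hs
      rcases Nat.lt_or_ge r (s + 1) with h | h
      · exact (ih (by omega) (by omega)).trans
          (Nat.choose_le_succ_of_lt_half_left (by omega))
      · have : r = s + 1 := by omega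
        subst this; exact le_rfl

lemma choose_two_le {n i : ℕ} (h2 : 2 ≤ i) (hi : i + 2 ≤ n) :
    n.choose 2 ≤ n.choose i := by
  rcases le_or_gt i (n / 2) with h | h
  · exact choose_mono_half _ h2 h
  · rw [← Nat.choose_symm (by omega : i ≤ n)]
    exact choose_mono_half _ (by omega) (by omega)

lemma two_mul_choose_two (n : ℕ) : 2 * n.choose 2 = n * (n - 1) := by
  cases n with
  | zero => rfl
  | succ k =>
      rw [Nat.choose_two_right, Nat.succ_sub_one]
      exact Nat.mul_div_cancel'
        (by simpa [mul_comm] using (Nat.even_mul_succ_self k).two_dvd)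

set_option maxHeartbeats 1600000 in
theorem height_lln_rho_ge_one (ρ : ℝ) (hρ : 1 ≤ ρ) :
    ∀ ε > (0 : ℝ),
      Tendsto
        (fun N : ℕ =>
          ∑ k ∈ (Finset.Icc 1 N).filter (fun k : ℕ => ε ≤ |(k : ℝ) / N - 1|), pmfP ρ N k)
        atTop (𝓝 0) := by
  intro ε hε
  have hρ0 : (0 : ℝ) ≤ ρ := le_trans zero_le_one hρ
  -- identify the filtered set
  have hset : ∀ N : ℕ, 1 ≤ N →
      (Finset.Icc 1 N).filter (fun k : ℕ => ε ≤ |(k : ℝ) / N - 1|) =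
        Finset.Icc 1 ⌊(1 - ε) * (N : ℝ)⌋₊ := by
    intro N hN
    have hNpos : (0 : ℝ) < N := by exact_mod_cast hN
    have hmN : ⌊(1 - ε) * (N : ℝ)⌋₊ ≤ N := by
      have : (1 - ε) * (N : ℝ) ≤ ((N : ℕ) : ℝ) := by nlinarith
      calc ⌊(1 - ε) * (N : ℝ)⌋₊ ≤ ⌊((N : ℕ) : ℝ)⌋₊ := Nat.floor_le_floor this
        _ = N := Nat.floor_natCast N
    ext k
    simp only [Finset.mem_filter, Finset.mem_Icc]
    constructor
    · rintro ⟨⟨hk1, hkN⟩, hcond⟩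
      refine ⟨hk1, ?_⟩
      have hkN' : (k : ℝ) / N ≤ 1 := by
        rw [div_le_one hNpos]; exact_mod_cast hkN
      rw [abs_of_nonpos (by linarith)] at hcond
      rw [Nat.le_floor_iff' (by omega)]
      have : (k : ℝ) / N ≤ 1 - ε := by linarith
      calc (k : ℝ) = ((k : ℝ) / N) * N := by field_simp
        _ ≤ (1 - ε) * N := by nlinarith
    · rintro ⟨hk1, hkm⟩
      have hkN : k ≤ N := le_trans hkm hmN
      refine ⟨⟨hk1, hkN⟩, ?_⟩
      have hkR : (k : ℝ) ≤ (1 - ε) * N := by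
        have := (Nat.le_floor_iff' (by omega : k ≠ 0)).mp hkm
        exact this
      have hdiv : (k : ℝ) / N ≤ 1 - ε := by
        rw [div_le_iff₀ hNpos]; linarith
      have hkN' : (k : ℝ) / N ≤ 1 := by
        rw [div_le_one hNpos]; exact_mod_cast hkN
      rw [abs_of_nonpos (by linarith)]
      linarith
  -- squeeze
  apply squeeze_zero' (g := fun N : ℕ => 7 / ((N : ℝ) - 2))
  · filter_upwards [eventually_ge_atTop 1] with N _
    exact Finset.sum_nonneg fun k hk => by
      have := (Finset.mem_Icc.mp (Finset.mem_filter.mp hk).1).1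
      exact pmfP_nonneg hρ0 N k this
  · have h3 : ∀ᶠ N : ℕ in atTop, (3 : ℝ) ≤ ε * N :=
      (tendsto_natCast_atTop_atTop.const_mul_atTop hε).eventually_ge_atTop 3
    filter_upwards [eventually_ge_atTop 5, h3] with N h5 h3N
    have hN1 : 1 ≤ N := by omega
    set m := ⌊(1 - ε) * (N : ℝ)⌋₊ with hm
    have hNR : (5 : ℝ) ≤ (N : ℝ) := by exact_mod_cast h5
    -- m ≤ N - 3
    have hmN3 : m ≤ N - 3 := by
      have h1 : (1 - ε) * (N : ℝ) ≤ ((N - 3 : ℕ) : ℝ) := by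
        have : ((N - 3 : ℕ) : ℝ) = (N : ℝ) - 3 := by
          push_cast [Nat.cast_sub (by omega : 3 ≤ N)]; ring
        rw [this]; nlinarith
      calc m ≤ ⌊((N - 3 : ℕ) : ℝ)⌋₊ := Nat.floor_le_floor h1
        _ = N - 3 := Nat.floor_natCast _
    have hm1N : m + 1 ≤ N := by omega
    rw [hset N hN1, sum_pmfP_Icc, tailP_one N hN1]
    -- tail value
    rw [tailP, if_pos hm1N]
    set s : ℝ := ∑ i ∈ Finset.Ico 1 (m + 1), rfun ρ N i with hsdef
    have hsum : ∑ i ∈ Finset.range (m + 1), rfun ρ N i = 1 + s := by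
      rw [Finset.range_eq_Ico,
        ← Finset.sum_Ico_consecutive (fun i => rfun ρ N i) (Nat.zero_le 1) (by omega : 1 ≤ m + 1)]
      have : Finset.Ico 0 1 = {0} := rfl
      rw [this, Finset.sum_singleton, rfun_zero]
    have hs0 : 0 ≤ s := Finset.sum_nonneg fun i _ => rfun_nonneg hρ0 N i
    rw [hsum]
    -- 1 - (1+s)⁻¹ ≤ s
    have h1s : (0 : ℝ) < 1 + s := by linarith
    have hkey : 1 - (1 + s)⁻¹ ≤ s := by
      have hinv : (1 + s) * (1 + s)⁻¹ = 1 := mul_inv_cancel₀ (ne_of_gt h1s)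
      nlinarith [sq_nonneg s, inv_nonneg.mpr (le_of_lt h1s)]
    -- bound s
    have hx : (0 : ℝ) < (N : ℝ) - 2 := by linarith
    have hsbound : s ≤ 7 / ((N : ℝ) - 2) := by
      rcases Nat.eq_zero_or_pos m with hm0 | hmpos
      · rw [hsdef, hm0]
        simp only [Finset.Ico_self, Finset.sum_empty]
        positivity
      · -- split off i = 1
        rw [hsdef, ← Finset.sum_Ico_consecutive (fun i => rfun ρ N i)
            (by omega : 1 ≤ 2) (by omega : 2 ≤ m + 1)]
        have hIco12 : Finset.Ico 1 2 = {1} := rfl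
        rw [hIco12, Finset.sum_singleton]
        -- first term
        have hc1 : ((N - 1).choose 1 : ℝ) = (N : ℝ) - 1 := by
          rw [Nat.choose_one_right]
          push_cast [Nat.cast_sub (by omega : 1 ≤ N)]; ring
        have hterm1 : rfun ρ N 1 ≤ 1 / ((N : ℝ) - 2) := by
          rw [rfun, hc1, pow_one, one_div]
          apply inv_anti₀ hx
          nlinarith
        -- remaining terms
        have hc2 : ((N : ℝ) - 2) ^ 2 / 2 ≤ ((N - 1).choose 2 : ℝ) := by
          have h2C : 2 * (N - 1).choose 2 = (N - 1) * (N - 2) := by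
            have := two_mul_choose_two (N - 1)
            have h : N - 1 - 1 = N - 2 := by omega
            rw [h] at this; exact this
          have : (2 : ℝ) * ((N - 1).choose 2 : ℝ) = ((N : ℝ) - 1) * ((N : ℝ) - 2) := by
            have := congrArg (fun x : ℕ => (x : ℝ)) h2C
            push_cast [Nat.cast_sub (by omega : 1 ≤ N), Nat.cast_sub (by omega : 2 ≤ N)] at this
            linarith
          nlinarith
        have hC2pos : (0 : ℝ) < ((N - 1).choose 2 : ℝ) := by nlinarith
        have hterm : ∀ i ∈ Finset.Ico 2 (m + 1), rfun ρ N i ≤ 2 / ((N : ℝ) - 2) ^ 2 := by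
          intro i hi
          obtain ⟨hi2, him⟩ := Finset.mem_Ico.mp hi
          have hiN : i + 2 ≤ N - 1 := by omega
          have hCle : (N - 1).choose 2 ≤ (N - 1).choose i := choose_two_le hi2 hiN
          have hCleR : ((N - 1).choose 2 : ℝ) ≤ ((N - 1).choose i : ℝ) := by exact_mod_cast hCle
          have hρi : (1 : ℝ) ≤ ρ ^ i := one_le_pow₀ hρ
          have hCipos : (0 : ℝ) < ((N - 1).choose i : ℝ) := lt_of_lt_of_le hC2pos hCleR
          calc rfun ρ N i = (ρ ^ i * ((N - 1).choose i : ℝ))⁻¹ := rfl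
            _ ≤ (((N - 1).choose 2 : ℝ))⁻¹ := by
                apply inv_anti₀ hC2pos
                nlinarith
            _ ≤ (((N : ℝ) - 2) ^ 2 / 2)⁻¹ := inv_anti₀ (by positivity) hc2
            _ = 2 / ((N : ℝ) - 2) ^ 2 := by rw [inv_div]
        have hrest : ∑ i ∈ Finset.Ico 2 (m + 1), rfun ρ N i ≤
            (N : ℝ) * (2 / ((N : ℝ) - 2) ^ 2) := by
          calc ∑ i ∈ Finset.Ico 2 (m + 1), rfun ρ N i
              ≤ ∑ _i ∈ Finset.Ico 2 (m + 1), 2 / ((N : ℝ) - 2) ^ 2 :=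
                Finset.sum_le_sum hterm
            _ = ((m + 1 - 2 : ℕ) : ℝ) * (2 / ((N : ℝ) - 2) ^ 2) := by
                rw [Finset.sum_const, Nat.card_Ico]; simp
            _ ≤ (N : ℝ) * (2 / ((N : ℝ) - 2) ^ 2) := by
                apply mul_le_mul_of_nonneg_right _ (by positivity)
                exact_mod_cast (by omega : m + 1 - 2 ≤ N)
        have hfinal : 1 / ((N : ℝ) - 2) + (N : ℝ) * (2 / ((N : ℝ) - 2) ^ 2) ≤
            7 / ((N : ℝ) - 2) := by
          have h6 : (N : ℝ) * (2 / ((N : ℝ) - 2) ^ 2) ≤ 6 / ((N : ℝ) - 2) := by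
            have heq : (N : ℝ) * (2 / ((N : ℝ) - 2) ^ 2) =
                (2 * (N : ℝ)) / ((N : ℝ) - 2) ^ 2 := by ring
            rw [heq, div_le_div_iff₀ (by positivity) hx]
            nlinarith
          have h17 : 1 / ((N : ℝ) - 2) + 6 / ((N : ℝ) - 2) = 7 / ((N : ℝ) - 2) := by
            ring
          linarith
        linarith
    linarith
  · have h1 : Tendsto (fun N : ℕ => (N : ℝ) - 2) atTop atTop := by
      simpa [sub_eq_add_neg] using
        tendsto_atTop_add_const_right atTop (-2) (tendsto_natCast_atTop_atTop (R := ℝ))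
    exact h1.const_div_atTop 7
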